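/- Let E be a real Hilbert space, let F_c, F_e : E → ℝ be convex functions, and let g_c, g_e : E → E be maps such that for every z ∈ E, F_c has gradient g_c(z) at z and F_e has gradient g_e(z) at z. Let M : E →L[ℝ] E be a self-adjoint continuous linear operator with ⟪M z, z⟫ ≥ 0 for all z ∈ E, and let s ≥ 0. If x, x' ∈ E satisfy x' − x = −s • M(g_c(x') − g_e(x)), then F_c(x') − F_e(x') ≤ F_c(x) − F_e(x). -/

import Mathlib

open scoped RealInnerProductSpace

private lemma convex_grad_ineq {E : Type*} [NormedAddCommGroup E] [InnerProductSpace ℝ E]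
    [CompleteSpace E] {f : E → ℝ} (hf : ConvexOn ℝ Set.univ f) {g : E} {y : E}
    (hg : HasGradientAt f g y) (z : E) :
    f y + ⟪g, z - y⟫ ≤ f z := by
  set h : ℝ → ℝ := fun t => f (y + t • (z - y)) with hh
  have hline : ∀ t : ℝ, HasDerivAt (fun t : ℝ => y + t • (z - y)) (z - y) t := by
    intro t
    simpa using ((hasDerivAt_id t).smul_const (z - y)).const_add y
  have hderiv : HasDerivAt h ⟪g, z - y⟫ 0 := by
    have hy0 : y + (0:ℝ) • (z - y) = y := by simp
    have := (HasFDerivAt.comp (0:ℝ) (hy0 ▸ hg.hasFDerivAt) (hline 0).hasFDerivAt).hasDerivAt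
    simpa [h, real_inner_comm, Function.comp_def] using this
  have hconv : ConvexOn ℝ Set.univ h := by
    refine ⟨convex_univ, fun a _ b _ p q hp hq hpq => ?_⟩
    have : y + (p * a + q * b) • (z - y) = p • (y + a • (z - y)) + q • (y + b • (z - y)) := by
      have h1 : p • y + q • y = y := by rw [← add_smul, hpq, one_smul]
      simp only [smul_add, smul_smul]
      nth_rewrite 1 [← h1]
      module
    simp only [h, smul_eq_mul, this]
    exact hf.2 (Set.mem_univ _) (Set.mem_univ _) hp hq hpq
  have hslope : ⟪g, z - y⟫ ≤ slope h 0 1 :=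
    hconv.le_slope_of_hasDerivWithinAt (Set.mem_univ 0) (Set.mem_univ 1) one_pos
      (hderiv.hasDerivWithinAt)
  have : slope h 0 1 = h 1 - h 0 := by simp [slope_def_field]
  have h0 : h 0 = f y := by simp [h]
  have h1 : h 1 = f z := by simp [h]
  rw [this, h0, h1] at hslope
  linarith

theorem convex_splitting_energy_stability
    {E : Type*} [NormedAddCommGroup E] [InnerProductSpace ℝ E] [CompleteSpace E]
    (Fc Fe : E → ℝ)
    (hFc : ConvexOn ℝ Set.univ Fc) (hFe : ConvexOn ℝ Set.univ Fe)
    (gc ge : E → E)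
    (hgc : ∀ z, HasGradientAt Fc (gc z) z) (hge : ∀ z, HasGradientAt Fe (ge z) z)
    (M : E →L[ℝ] E) (hM : IsSelfAdjoint M) (hMpos : ∀ z, 0 ≤ ⟪M z, z⟫)
    (s : ℝ) (hs : 0 ≤ s) (x x' : E)
    (hstep : x' - x = -(s • M (gc x' - ge x))) :
    Fc x' - Fe x' ≤ Fc x - Fe x := by
  have h1 : Fc x' + ⟪gc x', x - x'⟫ ≤ Fc x := convex_grad_ineq hFc (hgc x') x
  have h2 : Fe x + ⟪ge x, x' - x⟫ ≤ Fe x' := convex_grad_ineq hFe (hge x) x'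
  set d := gc x' - ge x with hd
  have key : ⟪d, x' - x⟫ = -(s * ⟪M d, d⟫) := by
    rw [hstep]
    rw [inner_neg_right, real_inner_smul_right, real_inner_comm]
  have hpos : 0 ≤ s * ⟪M d, d⟫ := mul_nonneg hs (hMpos d)
  have hsum : ⟪gc x', x' - x⟫ - ⟪ge x, x' - x⟫ = ⟪d, x' - x⟫ := by
    rw [hd, inner_sub_left]
  have hxx : ⟪gc x', x - x'⟫ = -⟪gc x', x' - x⟫ := by
    rw [← inner_neg_right]; congr 1; abel
  nlinarith [h1, h2]
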